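/- Let T be the 4×4 lower-triangular matrix of the coefficient coarsening map with diagonal entries 1/4, 1/16, 1/64, 1/256. Then for any initial coefficient vector c⁽⁰⁾ ∈ ℝ⁴ with first component c₁⁽⁰⁾ ≠ 0, the rescaled iterates 4^ℓ Tᐩℓ c⁽⁰⁾ converge as ℓ → ∞ to c₁⁽⁰⁾ · v, where v = (1, −1/12, 1/90, −1/560) is the eigenvector of T for its dominant eigenvalue 1/4. -/

import Mathlib

open Filter Matrix

noncomputable def Tm : Matrix (Fin 4) (Fin 4) ℝ :=
  !![1/4, 0, 0, 0;
     -1/64, 1/16, 0, 0;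
     1/512, -1/128, 1/64, 0;
     -5/16384, 5/4096, -3/1024, 1/256]

noncomputable def P1 : Matrix (Fin 4) (Fin 4) ℝ :=
  !![1, 0, 0, 0; -1/12, 0, 0, 0; 1/90, 0, 0, 0; -1/560, 0, 0, 0]

noncomputable def P2 : Matrix (Fin 4) (Fin 4) ℝ :=
  !![0, 0, 0, 0; 1/12, 1, 0, 0; -1/72, -1/6, 0, 0; 7/2880, 7/240, 0, 0]

noncomputable def P3 : Matrix (Fin 4) (Fin 4) ℝ :=
  !![0, 0, 0, 0; 0, 0, 0, 0; 1/360, 1/6, 1, 0; -1/1440, -1/24, -1/4, 0]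

noncomputable def P4 : Matrix (Fin 4) (Fin 4) ℝ :=
  !![0, 0, 0, 0; 0, 0, 0, 0; 0, 0, 0, 0; 1/20160, 1/80, 1/4, 1]

lemma sumP : P1 + P2 + P3 + P4 = (1 : Matrix (Fin 4) (Fin 4) ℝ) := by
  ext i j
  fin_cases i <;> fin_cases j <;>
    simp [P1, P2, P3, P4, Matrix.one_apply, Matrix.vecHead, Matrix.vecTail] <;> norm_num

lemma TP1 : Tm * P1 = (1/4 : ℝ) • P1 := by
  ext i j
  fin_cases i <;> fin_cases j <;>
    simp [Tm, P1, Matrix.mul_apply, Fin.sum_univ_four, Matrix.vecHead, Matrix.vecTail] <;> norm_num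

lemma TP2 : Tm * P2 = (1/16 : ℝ) • P2 := by
  ext i j
  fin_cases i <;> fin_cases j <;>
    simp [Tm, P2, Matrix.mul_apply, Fin.sum_univ_four, Matrix.vecHead, Matrix.vecTail] <;> norm_num

lemma TP3 : Tm * P3 = (1/64 : ℝ) • P3 := by
  ext i j
  fin_cases i <;> fin_cases j <;>
    simp [Tm, P3, Matrix.mul_apply, Fin.sum_univ_four, Matrix.vecHead, Matrix.vecTail] <;> norm_num

lemma TP4 : Tm * P4 = (1/256 : ℝ) • P4 := by
  ext i j
  fin_cases i <;> fin_cases j <;>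
    simp [Tm, P4, Matrix.mul_apply, Fin.sum_univ_four, Matrix.vecHead, Matrix.vecTail] <;> norm_num

lemma spectral (ℓ : ℕ) :
    (4 : ℝ) ^ ℓ • Tm ^ ℓ =
      P1 + (1/4 : ℝ) ^ ℓ • P2 + (1/16 : ℝ) ^ ℓ • P3 + (1/64 : ℝ) ^ ℓ • P4 := by
  induction ℓ with
  | zero => simpa using sumP.symm
  | succ n ih =>
      have : (4 : ℝ) ^ (n + 1) • Tm ^ (n + 1)
          = (4 : ℝ) • (Tm * ((4 : ℝ) ^ n • Tm ^ n)) := by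
        rw [pow_succ', pow_succ', Matrix.mul_smul, smul_smul]
      rw [this, ih]
      rw [Matrix.mul_add, Matrix.mul_add, Matrix.mul_add,
        Matrix.mul_smul, Matrix.mul_smul, Matrix.mul_smul,
        TP1, TP2, TP3, TP4]
      ext i j
      simp [Matrix.add_apply, Matrix.smul_apply]
      ring

/-- Power iteration of the coarsening matrix: for any initial coefficient
vector with nonzero first component, the rescaled iterates `4^ℓ T^ℓ c⁽⁰⁾`
converge to `c₁⁽⁰⁾ · v`, `v = (1, −1/12, 1/90, −1/560)`. -/
theorem stmt13 :
    let T : Matrix (Fin 4) (Fin 4) ℝ :=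
      !![1/4, 0, 0, 0;
         -1/64, 1/16, 0, 0;
         1/512, -1/128, 1/64, 0;
         -5/16384, 5/4096, -3/1024, 1/256]
    let v : Fin 4 → ℝ := ![1, -1/12, 1/90, -1/560]
    ∀ c0 : Fin 4 → ℝ, c0 0 ≠ 0 →
      Filter.Tendsto (fun ℓ : ℕ => (4 : ℝ) ^ ℓ • (T ^ ℓ).mulVec c0)
        Filter.atTop (nhds (c0 0 • v)) := by
  intro T v c0 _
  have hT : T = Tm := rfl
  have heq : ∀ ℓ : ℕ, (4 : ℝ) ^ ℓ • (T ^ ℓ).mulVec c0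
      = P1.mulVec c0 + (1/4 : ℝ) ^ ℓ • P2.mulVec c0
        + (1/16 : ℝ) ^ ℓ • P3.mulVec c0 + (1/64 : ℝ) ^ ℓ • P4.mulVec c0 := by
    intro ℓ
    rw [hT, ← Matrix.smul_mulVec, spectral ℓ]
    simp [Matrix.add_mulVec, Matrix.smul_mulVec]
  have hP1 : P1.mulVec c0 = c0 0 • v := by
    funext i
    fin_cases i <;>
      simp [P1, v, Matrix.mulVec, dotProduct, Fin.sum_univ_four] <;> ring
  have hlim : Filter.Tendsto
      (fun ℓ : ℕ => P1.mulVec c0 + (1/4 : ℝ) ^ ℓ • P2.mulVec c0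
        + (1/16 : ℝ) ^ ℓ • P3.mulVec c0 + (1/64 : ℝ) ^ ℓ • P4.mulVec c0)
      atTop (nhds (c0 0 • v)) := by
    have h0 : ∀ (r : ℝ), 0 ≤ r → r < 1 → ∀ w : Fin 4 → ℝ,
        Filter.Tendsto (fun ℓ : ℕ => r ^ ℓ • w) atTop (nhds 0) := by
      intro r hr hr' w
      have := (tendsto_pow_atTop_nhds_zero_of_lt_one hr hr').smul_const w
      simpa using this
    have := (((tendsto_const_nhds (x := P1.mulVec c0) (f := atTop)).add
      (h0 (1/4) (by norm_num) (by norm_num) (P2.mulVec c0))).add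
      (h0 (1/16) (by norm_num) (by norm_num) (P3.mulVec c0))).add
      (h0 (1/64) (by norm_num) (by norm_num) (P4.mulVec c0))
    simpa [hP1] using this
  exact hlim.congr (fun ℓ => (heq ℓ).symm)
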